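/- arXiv:2309.02648 — 3 statements merged into one kernel-verified Lean document; each statement's English description precedes it below -/
import Mathlib

section
/- Let Q ≻ 0, Q̄ ⪰ 0 be Hermitian, q, q̄ complex vectors, q̄₀ ∈ ℝ. If ς ≥ 0 and x* = (ςQ̄ + Q)⁻¹(ςq̄ + q) satisfies g(x*) = x*ᴴQ̄x* − 2 Re(q̄ᴴx*) + q̄₀ = 0, then x* is a global minimizer of f(x) = xᴴQx − 2 Re(qᴴx) over the feasible set {x : g(x) ≤ 0}. -/
open Matrix
open scoped ComplexOrder

private lemma herm_dot_symm {n : ℕ} (M : Matrix (Fin n) (Fin n) ℂ) (hM : M.IsHermitian)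
    (x y : Fin n → ℂ) : star x ⬝ᵥ M.mulVec y = star (star y ⬝ᵥ M.mulVec x) := by
  rw [star_dotProduct, star_mulVec, ← dotProduct_mulVec, hM.eq]

/-- KKT sufficiency (CASE-II of Lemma 1): if ς ≥ 0 and
x* = (ςQ̄ + Q)⁻¹(ςq̄ + q) satisfies the constraint with equality, then x* is a global
minimizer of the strictly convex quadratic objective over the feasible set. -/
theorem stmt_2 {n : ℕ} (Q Qb : Matrix (Fin n) (Fin n) ℂ)
    (hQ : Q.PosDef) (hQb : Qb.PosSemidef)
    (q qb : Fin n → ℂ) (qb0 : ℝ) (ς : ℝ) (hς : 0 ≤ ς)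
    (xs : Fin n → ℂ)
    (hxs : xs = ((ς : ℂ) • Qb + Q)⁻¹.mulVec ((ς : ℂ) • qb + q))
    (hactive : (star xs ⬝ᵥ Qb.mulVec xs).re - 2 * (star qb ⬝ᵥ xs).re + qb0 = 0) :
    ∀ x : Fin n → ℂ,
      (star x ⬝ᵥ Qb.mulVec x).re - 2 * (star qb ⬝ᵥ x).re + qb0 ≤ 0 →
      (star xs ⬝ᵥ Q.mulVec xs).re - 2 * (star q ⬝ᵥ xs).re
        ≤ (star x ⬝ᵥ Q.mulVec x).re - 2 * (star q ⬝ᵥ x).re := by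
  intro x hfeas
  set M : Matrix (Fin n) (Fin n) ℂ := (ς : ℂ) • Qb + Q with hM
  have hsmul : ((ς : ℂ) • Qb).PosSemidef := by
    refine Matrix.PosSemidef.of_dotProduct_mulVec_nonneg ?_ ?_
    · unfold Matrix.IsHermitian
      rw [conjTranspose_smul, hQb.1.eq]; simp
    · intro v
      rw [smul_mulVec, dotProduct_smul, smul_eq_mul]
      exact mul_nonneg (by exact_mod_cast hς) (hQb.dotProduct_mulVec_nonneg v)
  have hMpd : M.PosDef := Matrix.PosDef.posSemidef_add hsmul hQ
  set b : Fin n → ℂ := (ς : ℂ) • qb + q with hb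
  -- M *ᵥ xs = b
  have hMxs : M.mulVec xs = b := by
    rw [hxs, mulVec_mulVec, Matrix.mul_nonsing_inv _ (isUnit_iff_isUnit_det _ |>.1 hMpd.isUnit),
      one_mulVec]
  -- key convexity inequality
  have h0 : 0 ≤ (star (x - xs) ⬝ᵥ M.mulVec (x - xs)).re :=
    (Complex.le_def.mp (hMpd.posSemidef.dotProduct_mulVec_nonneg (x - xs))).1
  have hexp : star (x - xs) ⬝ᵥ M.mulVec (x - xs)
      = star x ⬝ᵥ M.mulVec x - star x ⬝ᵥ M.mulVec xs - star xs ⬝ᵥ M.mulVec x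
        + star xs ⬝ᵥ M.mulVec xs := by
    rw [star_sub, mulVec_sub, sub_dotProduct, dotProduct_sub, dotProduct_sub]
    ring
  have hsymm := herm_dot_symm M hMpd.isHermitian x xs
  have hkey : 0 ≤ (star x ⬝ᵥ M.mulVec x).re - 2 * (star xs ⬝ᵥ M.mulVec x).re
      + (star xs ⬝ᵥ M.mulVec xs).re := by
    have : (star x ⬝ᵥ M.mulVec xs).re = (star xs ⬝ᵥ M.mulVec x).re := by
      rw [hsymm, Complex.star_def, Complex.conj_re]
    rw [hexp] at h0
    simp only [Complex.sub_re, Complex.add_re, this] at h0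
    linarith
  -- star xs ⬝ᵥ M *ᵥ x = star b ⬝ᵥ x   and   star xs ⬝ᵥ M *ᵥ xs = star b ⬝ᵥ xs
  have hbdot : ∀ v : Fin n → ℂ, star xs ⬝ᵥ M.mulVec v = star b ⬝ᵥ v := by
    intro v
    rw [← hMxs, star_mulVec, ← dotProduct_mulVec, hMpd.isHermitian.eq]
  -- expand M and b real parts
  have hMre : ∀ v : Fin n → ℂ,
      (star v ⬝ᵥ M.mulVec v).re = ς * (star v ⬝ᵥ Qb.mulVec v).re + (star v ⬝ᵥ Q.mulVec v).re := by
    intro v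
    rw [hM, add_mulVec, dotProduct_add, smul_mulVec, dotProduct_smul, smul_eq_mul]
    simp [Complex.add_re, Complex.mul_re]
  have hbre : ∀ v : Fin n → ℂ,
      (star b ⬝ᵥ v).re = ς * (star qb ⬝ᵥ v).re + (star q ⬝ᵥ v).re := by
    intro v
    rw [hb, star_add, add_dotProduct, star_smul, smul_dotProduct]
    simp [Complex.add_re, Complex.mul_re, Complex.smul_re]
  have h1 : (star xs ⬝ᵥ M.mulVec x).re = ς * (star qb ⬝ᵥ x).re + (star q ⬝ᵥ x).re := by
    rw [hbdot x, hbre]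
  have h2 : (star xs ⬝ᵥ M.mulVec xs).re = ς * (star qb ⬝ᵥ xs).re + (star q ⬝ᵥ xs).re := by
    rw [hbdot xs, hbre]
  have h3 := hMre x
  have h4 := hMre xs
  nlinarith [mul_nonneg hς (by linarith :
    (star xs ⬝ᵥ Qb.mulVec xs).re - 2 * (star qb ⬝ᵥ xs).re
      - ((star x ⬝ᵥ Qb.mulVec x).re - 2 * (star qb ⬝ᵥ x).re) ≥ 0)]
end

section
/- Let aₖ > 0, bₖ < 0, dₖ > 0, P̄ₖ > 0, ĉ > 0, and suppose Σₖ dₖ min{−bₖ/(2aₖ), P̄ₖ}² > ĉ. If ν* > 0 satisfies Σₖ dₖ pₖ(ν*)² = ĉ where pₖ(ν) = min{−bₖ/(2aₖ + 2ν dₖ), P̄ₖ}, then {pₖ(ν*)} is an optimal solution to: minimize Σₖ (aₖ pₖ² + bₖ pₖ) subject to Σₖ dₖ pₖ² ≤ ĉ and 0 ≤ pₖ ≤ P̄ₖ. -/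
/-- Pointwise Lagrangian optimality: the clamped point minimizes `c x² + b x` on `[0,P]`. -/
lemma key_min (c b P q : ℝ) (hc : 0 < c) (hb : b < 0) (hP : 0 < P)
    (hq0 : 0 ≤ q) (hqP : q ≤ P) :
    c * (min (-b / (2 * c)) P) ^ 2 + b * (min (-b / (2 * c)) P) ≤ c * q ^ 2 + b * q := by
  set m := -b / (2 * c) with hm
  have hm2 : b = -(2 * c) * m := by
    rw [hm]; field_simp
  rcases le_total m P with h | h
  · rw [min_eq_left h]
    nlinarith [sq_nonneg (q - m)]
  · rw [min_eq_right h]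
    have h1 : P * (2 * c) ≤ -b := (le_div_iff₀ (by positivity)).mp h
    have h3 : c * (q + P) + b ≤ 0 := by nlinarith
    nlinarith [mul_nonneg (sub_nonneg.2 hqP) (by linarith : (0:ℝ) ≤ -(c * (q + P) + b))]

/-- Theorem 1 (CASE-II): if the box-optimal point violates the sum-power constraint and
ν* > 0 satisfies Σₖ dₖ pₖ(ν*)² = chat, then {pₖ(ν*)} is optimal for the constrained problem. -/
theorem stmt_11 {K : ℕ} (a b d P : Fin K → ℝ) (chat : ℝ)
    (ha : ∀ k, 0 < a k) (hb : ∀ k, b k < 0) (hd : ∀ k, 0 < d k)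
    (hchat : 0 < chat) (hP : ∀ k, 0 < P k)
    (hviol : chat < ∑ k, d k * (min (-(b k) / (2 * a k)) (P k)) ^ 2)
    (pν : Fin K → ℝ → ℝ)
    (hpν : ∀ k ν, pν k ν = min (-(b k) / (2 * a k + 2 * ν * d k)) (P k))
    (ν : ℝ) (hν : 0 < ν)
    (heq : ∑ k, d k * (pν k ν) ^ 2 = chat) :
    (∀ k, 0 ≤ pν k ν ∧ pν k ν ≤ P k) ∧
    (∑ k, d k * (pν k ν) ^ 2) ≤ chat ∧
    (∀ p : Fin K → ℝ, (∀ k, 0 ≤ p k ∧ p k ≤ P k) →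
      (∑ k, d k * p k ^ 2) ≤ chat →
      (∑ k, (a k * (pν k ν) ^ 2 + b k * (pν k ν))) ≤ ∑ k, (a k * p k ^ 2 + b k * p k)) := by
  have hc : ∀ k, 0 < a k + ν * d k := fun k => by nlinarith [ha k, hd k]
  have hpν' : ∀ k, pν k ν = min (-(b k) / (2 * (a k + ν * d k))) (P k) := by
    intro k
    rw [hpν k ν]; ring_nf
  have hbounds : ∀ k, 0 ≤ pν k ν ∧ pν k ν ≤ P k := by
    intro k
    rw [hpν' k]
    constructor
    · apply le_min
      · apply div_nonneg <;> nlinarith [hb k, hc k]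
      · exact (hP k).le
    · exact min_le_right _ _
  refine ⟨hbounds, heq.le, ?_⟩
  intro p hpfeas hple
  have hpt : ∀ k ∈ Finset.univ, (a k * (pν k ν) ^ 2 + b k * (pν k ν)) + ν * (d k * (pν k ν) ^ 2)
      ≤ (a k * p k ^ 2 + b k * p k) + ν * (d k * p k ^ 2) := by
    intro k _
    have hk := key_min (a k + ν * d k) (b k) (P k) (p k) (hc k) (hb k) (hP k)
      (hpfeas k).1 (hpfeas k).2
    rw [← hpν' k] at hk
    nlinarith [hk]
  have hsum := Finset.sum_le_sum hpt
  simp only [Finset.sum_add_distrib, ← Finset.mul_sum] at hsum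
  have h2 : ν * (∑ k, d k * p k ^ 2) ≤ ν * chat :=
    mul_le_mul_of_nonneg_left hple hν.le
  rw [heq] at hsum
  simp only [Finset.sum_add_distrib]
  linarith
end

section
/- For q > 0, a, σ² > 0 and any γ, h, w with denominators positive: the WMMSE identity holds, namely log(1 + q|uᴴh|²/I) = max over ω ≥ 0 and β ∈ ℂ of [log ω − ω(1 − 2 Re(β* √q uᴴh) + |β|²(q|uᴴh|² + I)) + 1], where I > 0 is a fixed interference-plus-noise power, with the maximum attained at β* = √q uᴴh/(q|uᴴh|² + I) and ω* = 1 + q|uᴴh|²/I. -/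
/-- Scalar WMMSE rate–MSE identity: log(1 + q|g|²/I) equals the maximum over ω > 0 and
β ∈ ℂ of log ω − ω(1 − 2 Re(β* √q g) + |β|²(q|g|² + I)) + 1, attained at
β* = √q g/(q|g|² + I) and ω* = 1 + q|g|²/I. -/
theorem stmt_17 (g : ℂ) (q I' : ℝ) (hq : 0 < q) (hI : 0 < I')
    (F : ℝ → ℂ → ℝ)
    (hF : ∀ ω β, F ω β = Real.log ω
      - ω * (1 - 2 * ((starRingEnd ℂ) β * (Real.sqrt q : ℂ) * g).re
        + ‖β‖ ^ 2 * (q * ‖g‖ ^ 2 + I')) + 1) :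
    let βs : ℂ := ((Real.sqrt q : ℂ) * g) / ((q * ‖g‖ ^ 2 + I' : ℝ) : ℂ)
    let ωs : ℝ := 1 + q * ‖g‖ ^ 2 / I'
    F ωs βs = Real.log (1 + q * ‖g‖ ^ 2 / I') ∧
    (∀ ω : ℝ, 0 < ω → ∀ β : ℂ, F ω β ≤ Real.log (1 + q * ‖g‖ ^ 2 / I')) := by
  intro βs ωs
  have hng : (0:ℝ) ≤ ‖g‖^2 := by positivity
  set D : ℝ := q * ‖g‖ ^ 2 + I' with hDdef
  have hD : 0 < D := by positivity
  set s : ℝ := Real.sqrt q with hsdef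
  have hs2 : q = s * s := (Real.mul_self_sqrt hq.le).symm
  have hre : ∀ β : ℂ, ((starRingEnd ℂ) β * (s : ℂ) * g).re
      = s * (β.re * g.re + β.im * g.im) := by
    intro β
    simp [Complex.mul_re, Complex.mul_im]
    ring
  have hnorm : ∀ β : ℂ, ‖β‖^2 = β.re^2 + β.im^2 := by
    intro β
    rw [Complex.sq_norm, Complex.normSq_apply]
    ring
  have hgsum : g.re^2 + g.im^2 = ‖g‖^2 := (hnorm g).symm
  have hID : I' = D - s * s * (g.re^2 + g.im^2) := by
    rw [hgsum, ← hs2, hDdef]; ring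
  -- components of βs
  have hβseq : βs = ((s/D : ℝ) : ℂ) * g := by
    show ((s : ℂ) * g) / ((D : ℝ) : ℂ) = _
    have hD0 : ((D:ℝ):ℂ) ≠ 0 := by exact_mod_cast hD.ne'
    push_cast
    field_simp
  have hβre : βs.re = s / D * g.re := by rw [hβseq, Complex.re_ofReal_mul]
  have hβim : βs.im = s / D * g.im := by rw [hβseq, Complex.im_ofReal_mul]
  -- value of the MSE at βs
  have hes : 1 - 2 * ((starRingEnd ℂ) βs * (s : ℂ) * g).re
      + ‖βs‖ ^ 2 * D = I' / D := by
    rw [hre, hnorm, hβre, hβim, hID]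
    field_simp
    ring
  -- ωs = D / I'
  have hωs : ωs = D / I' := by
    show 1 + q * ‖g‖ ^ 2 / I' = D / I'
    field_simp [hDdef]
    ring
  have hlog : Real.log (1 + q * ‖g‖ ^ 2 / I') = Real.log (D / I') := by rw [← hωs]
  constructor
  · rw [hF, hes, hlog, hωs]
    have h1 : D / I' * (I' / D) = 1 := by field_simp
    rw [h1]; ring
  · intro ω hω β
    rw [hF, hlog]
    have hemin : I' / D ≤ 1 - 2 * ((starRingEnd ℂ) β * (s : ℂ) * g).re
        + ‖β‖ ^ 2 * D := by
      rw [hre, hnorm, div_le_iff₀ hD]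
      nlinarith [sq_nonneg (D * β.re - s * g.re),
        sq_nonneg (D * β.im - s * g.im), hID]
    have h1 : Real.log ω - ω * (1 - 2 * ((starRingEnd ℂ) β * (s : ℂ) * g).re
        + ‖β‖ ^ 2 * D) + 1 ≤ Real.log ω - ω * (I' / D) + 1 := by
      nlinarith [hemin, hω]
    refine h1.trans ?_
    have hpos : 0 < ω * (I' / D) := by positivity
    have h2 : Real.log (ω * (I' / D)) ≤ ω * (I' / D) - 1 :=
      Real.log_le_sub_one_of_pos hpos
    rw [Real.log_mul hω.ne' (by positivity), Real.log_div hI.ne' hD.ne'] at h2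
    rw [Real.log_div hD.ne' hI.ne']
    linarith
end
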